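/- Let V_1,…,V_K be nonempty pairwise disjoint subsets of {1,…,N}, let a_k ∈ 𝔸_{V_k} for each k, set a = ∑_{k=1}^K a_k, let P = {V_1,…,V_K}, and let c ∈ ℝ^N have strictly positive entries. Then N^eff(P,c) ≥ N^eff(a,c) ≥ (min_{k∈{1,…,K}} N^eff(a_k,c)/|V_k|) · N^eff(P,c). -/
import Mathlib

open Finset

/-- The effective sample size `N^eff(a, c)` of an `N × N` matrix. -/
noncomputable def Neff {N : ℕ} (a : Matrix (Fin N) (Fin N) ℝ) (c : Fin N → ℝ) : ℝ :=
  (∑ i, ∑ j, a i j * c j) ^ 2 / (∑ i, (∑ j, a i j * c j) ^ 2)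

/-- The partition effective sample size `N^eff(P, c)` for `P = {V_1, …, V_K}`. -/
noncomputable def NeffP {N K : ℕ} (Vs : Fin K → Finset (Fin N)) (c : Fin N → ℝ) : ℝ :=
  (∑ k, ∑ j ∈ Vs k, c j) ^ 2 / (∑ k, ((Vs k).card : ℝ)⁻¹ * (∑ j ∈ Vs k, c j) ^ 2)

/-- Membership in 𝔸_V. -/
def memA {N : ℕ} (V : Finset (Fin N)) (a : Matrix (Fin N) (Fin N) ℝ) : Prop :=
  (∀ i j, 0 ≤ a i j) ∧
  (∀ i j, (i ∉ V ∨ j ∉ V) → a i j = 0) ∧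
  (∀ i ∈ V, ∑ j, a i j = 1) ∧
  (∀ j ∈ V, ∑ i, a i j = 1)

lemma sq_sum_eq_sum_sq {K : ℕ} (x : Fin K → ℝ)
    (h : ∀ k l, x k ≠ 0 → x l ≠ 0 → k = l) :
    (∑ k, x k) ^ 2 = ∑ k, (x k) ^ 2 := by
  by_cases hz : ∀ k, x k = 0
  · simp [hz]
  · push_neg at hz
    obtain ⟨k₀, hk₀⟩ := hz
    have hrest : ∀ b ∈ Finset.univ, b ≠ k₀ → x b = 0 := by
      intro b _ hb
      by_contra hb0
      exact hb (h b k₀ hb0 hk₀)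
    rw [Finset.sum_eq_single k₀ hrest (by simp),
      Finset.sum_eq_single k₀ (fun b hb' hb => by rw [hrest b hb' hb]; ring)
        (by simp)]

theorem stmt_10 {N K : ℕ} (hN : 1 ≤ N) (hK : 0 < K)
    (Vs : Fin K → Finset (Fin N))
    (hne : ∀ k, (Vs k).Nonempty)
    (hdisj : ∀ k l, k ≠ l → Disjoint (Vs k) (Vs l))
    (A : Fin K → Matrix (Fin N) (Fin N) ℝ) (hA : ∀ k, memA (Vs k) (A k))
    (c : Fin N → ℝ) (hc : ∀ j, 0 < c j) :
    Neff (∑ k, A k) c ≤ NeffP Vs c ∧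
    (Finset.univ.inf' ⟨⟨0, hK⟩, Finset.mem_univ _⟩
        (fun k => Neff (A k) c / ((Vs k).card : ℝ))) * NeffP Vs c
      ≤ Neff (∑ k, A k) c := by
  have hKne : Nonempty (Fin K) := ⟨⟨0, hK⟩⟩
  set r : Fin K → Fin N → ℝ := fun k i => ∑ j, A k i j * c j with hr
  set S : Fin K → ℝ := fun k => ∑ j ∈ Vs k, c j with hSdef
  have hr0 : ∀ k i, i ∉ Vs k → r k i = 0 := by
    intro k i hi
    apply Finset.sum_eq_zero
    intro j _
    rw [(hA k).2.1 i j (Or.inl hi)]; ring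
  have hrS : ∀ k, ∑ i, r k i = S k := by
    intro k
    rw [hr]
    simp only
    rw [Finset.sum_comm]
    have hcol : ∀ j : Fin N, ∑ i, A k i j * c j = if j ∈ Vs k then c j else 0 := by
      intro j
      by_cases hj : j ∈ Vs k
      · rw [if_pos hj, ← Finset.sum_mul, (hA k).2.2.2 j hj, one_mul]
      · rw [if_neg hj]
        exact Finset.sum_eq_zero fun i _ => by rw [(hA k).2.1 i j (Or.inr hj)]; ring
    rw [Finset.sum_congr rfl fun j _ => hcol j, Finset.sum_ite_mem, Finset.univ_inter]
  have hSpos : ∀ k, 0 < S k := fun k => Finset.sum_pos (fun j _ => hc j) (hne k)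
  set Q : Fin K → ℝ := fun k => ∑ i, (r k i) ^ 2 with hQdef
  have hQnn : ∀ k, 0 ≤ Q k := fun k => Finset.sum_nonneg fun i _ => sq_nonneg _
  have hcard : ∀ k, (0 : ℝ) < (Vs k).card := by
    intro k; exact_mod_cast Finset.card_pos.mpr (hne k)
  have hCS : ∀ k, S k ^ 2 ≤ (Vs k).card * Q k := by
    intro k
    have h1 : ∑ i, r k i = ∑ i ∈ Vs k, r k i :=
      (Finset.sum_subset (Finset.subset_univ _) fun i _ hi => hr0 k i hi).symm
    have h2 : Q k = ∑ i ∈ Vs k, (r k i) ^ 2 :=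
      (Finset.sum_subset (Finset.subset_univ _) fun i _ hi => by rw [hr0 k i hi]; ring).symm
    rw [← hrS k, h1, h2]
    exact sq_sum_le_card_mul_sum_sq (s := Vs k) (f := r k)
  have hQpos : ∀ k, 0 < Q k := by
    intro k
    rcases lt_or_eq_of_le (hQnn k) with h | h
    · exact h
    · exfalso
      have := hCS k
      rw [← h, mul_zero] at this
      nlinarith [hSpos k]
  -- row sums of the total matrix
  have hrow : ∀ i, ∑ j, (∑ k, A k) i j * c j = ∑ k, r k i := by
    intro i
    simp only [Matrix.sum_apply, Finset.sum_mul]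
    rw [Finset.sum_comm]
  -- per-i, at most one k has r k i ≠ 0
  have honce : ∀ i, ∀ k l, r k i ≠ 0 → r l i ≠ 0 → k = l := by
    intro i k l hk hl
    by_contra hkl
    have hik : i ∈ Vs k := by by_contra h; exact hk (hr0 k i h)
    have hil : i ∈ Vs l := by by_contra h; exact hl (hr0 l i h)
    exact (Finset.disjoint_left.mp (hdisj k l hkl) hik) hil
  have hNum : ∑ i, ∑ k, r k i = ∑ k, S k := by
    rw [Finset.sum_comm]
    exact Finset.sum_congr rfl fun k _ => hrS k
  have hDen : ∑ i, (∑ k, r k i) ^ 2 = ∑ k, Q k := by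
    rw [Finset.sum_congr rfl fun i _ => sq_sum_eq_sum_sq (fun k => r k i) (honce i),
      Finset.sum_comm]
  have hNeffSum : Neff (∑ k, A k) c = (∑ k, S k) ^ 2 / (∑ k, Q k) := by
    rw [Neff]
    simp only [hrow]
    rw [hNum, hDen]
  have hNeffk : ∀ k, Neff (A k) c = S k ^ 2 / Q k := by
    intro k
    rw [Neff, hrS k]
  have hNP : NeffP Vs c = (∑ k, S k) ^ 2 / (∑ k, ((Vs k).card : ℝ)⁻¹ * S k ^ 2) := rfl
  set T : ℝ := ∑ k, ((Vs k).card : ℝ)⁻¹ * S k ^ 2 with hT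
  have hTpos : 0 < T :=
    Finset.sum_pos (fun k _ => mul_pos (inv_pos.mpr (hcard k)) (pow_pos (hSpos k) 2))
      Finset.univ_nonempty
  have hTQ : T ≤ ∑ k, Q k := by
    apply Finset.sum_le_sum
    intro k _
    rw [inv_mul_le_iff₀ (hcard k)]
    exact hCS k
  have hQsum : 0 < ∑ k, Q k := Finset.sum_pos (fun k _ => hQpos k) Finset.univ_nonempty
  have hSsum : 0 < ∑ k, S k := Finset.sum_pos (fun k _ => hSpos k) Finset.univ_nonempty
  constructor
  · rw [hNeffSum, hNP]
    exact div_le_div_of_nonneg_left (by positivity) hTpos hTQ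
  · set m : ℝ := Finset.univ.inf' ⟨⟨0, hK⟩, Finset.mem_univ _⟩
      (fun k => Neff (A k) c / ((Vs k).card : ℝ)) with hm
    have hmQ : m * (∑ k, Q k) ≤ T := by
      rw [Finset.mul_sum, hT]
      apply Finset.sum_le_sum
      intro k _
      have h1 : m ≤ Neff (A k) c / ((Vs k).card : ℝ) :=
        Finset.inf'_le _ (Finset.mem_univ k)
      have h2 : m * Q k ≤ (Neff (A k) c / ((Vs k).card : ℝ)) * Q k :=
        mul_le_mul_of_nonneg_right h1 (hQnn k)
      refine h2.trans (le_of_eq ?_)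
      rw [hNeffk k]
      calc S k ^ 2 / Q k / ((Vs k).card : ℝ) * Q k
          = S k ^ 2 / ((Vs k).card : ℝ) / Q k * Q k := by
            rw [div_div, div_div, mul_comm (Q k)]
        _ = S k ^ 2 / ((Vs k).card : ℝ) := div_mul_cancel₀ _ (hQpos k).ne'
        _ = ((Vs k).card : ℝ)⁻¹ * S k ^ 2 := div_eq_inv_mul _ _
    rw [hNeffSum, hNP, ← mul_div_assoc, div_le_div_iff₀ hTpos hQsum]
    calc m * (∑ k, S k) ^ 2 * ∑ k, Q k = (∑ k, S k) ^ 2 * (m * ∑ k, Q k) := by ring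
      _ ≤ (∑ k, S k) ^ 2 * T := mul_le_mul_of_nonneg_left hmQ (sq_nonneg _)
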